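/- Let A be a finite-dimensional simple algebra that is not a division algebra. Then the linear span of square-zero elements of A equals the span of commutators [A,A]. -/

import Mathlib

def IsZpd (F A : Type*) [Field F] [Ring A] [Algebra F A] : Prop :=
  ∀ φ : A →ₗ[F] A →ₗ[F] F, (∀ x y : A, x * y = 0 → φ x y = 0) →
    ∃ τ : A →ₗ[F] F, ∀ x y : A, φ x y = τ (x * y)

def Is2Zpd (F A : Type*) [Field F] [Ring A] [Algebra F A] : Prop :=
  ∀ φ : A →ₗ[F] A →ₗ[F] F, (∀ x y : A, x * y = 0 → y * x = 0 → φ x y = 0) →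
    ∃ τ₁ τ₂ : A →ₗ[F] F, ∀ x y : A, φ x y = τ₁ (x * y) + τ₂ (y * x)

def IsZLpd (F A : Type*) [Field F] [Ring A] [Algebra F A] : Prop :=
  ∀ φ : A →ₗ[F] A →ₗ[F] F, (∀ x y : A, x * y = y * x → φ x y = 0) →
    ∃ τ : A →ₗ[F] F, ∀ x y : A, φ x y = τ (x * y - y * x)

section Aux

/-- If `a² = 0` and `b² = 0` then `ab - ba` lies in any subspace containing all
square-zero elements.  Indeed `u := ab + a - bab - ba` satisfies `u² = 0` and
`ab - ba = u - a + bab`. -/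
lemma sq_comm_mem {F A : Type*} [Field F] [Ring A] [Algebra F A]
    (V : Submodule F A) (hV : ∀ x : A, x * x = 0 → x ∈ V)
    {a b : A} (ha : a * a = 0) (hb : b * b = 0) : a * b - b * a ∈ V := by
  have h1 : ∀ x : A, a * (a * x) = 0 := fun x => by rw [← mul_assoc, ha, zero_mul]
  have h2 : ∀ x : A, b * (b * x) = 0 := fun x => by rw [← mul_assoc, hb, zero_mul]
  have hu : (a*b + a - b*a*b - b*a) * (a*b + a - b*a*b - b*a) = 0 := by
    simp only [sub_mul, mul_sub, add_mul, mul_add, mul_assoc, h1, h2, ha, hb,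
      mul_zero, zero_mul, sub_zero, zero_sub, add_zero, zero_add, neg_zero]
    abel
  have hbab : (b*(a*b)) * (b*(a*b)) = 0 := by
    simp only [mul_assoc, h2, mul_zero]
  have hkey : a*b - b*a = (a*b + a - b*a*b - b*a) - a + b*(a*b) := by
    rw [← mul_assoc]; abel
  rw [hkey]
  exact add_mem (sub_mem (hV _ hu) (hV _ ha)) (hV _ hbab)

/-- In a simple ring, a nonzero left ideal closed under right multiplication is
everything. -/
lemma twosided_eq_top' {A : Type*} [Ring A] [IsSimpleRing A] (I : Submodule A A)
    (hne : I ≠ ⊥) (hr : ∀ x ∈ I, ∀ y : A, x * y ∈ I) : I = ⊤ := by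
  obtain ⟨x, hxI, hx0⟩ := Submodule.ne_bot_iff I |>.mp hne
  let J : TwoSidedIdeal A := TwoSidedIdeal.mk' I I.zero_mem
      (fun h h' => I.add_mem h h') (fun h => I.neg_mem h)
      (fun {u v} h => by simpa [smul_eq_mul] using I.smul_mem u h)
      (fun {u v} h => hr u h v)
  have hxJ : x ∈ J := by simpa [J, TwoSidedIdeal.mem_mk'] using hxI
  have h1 : (1:A) ∈ J := IsSimpleRing.one_mem_of_ne_zero_mem J hx0 hxJ
  have h1' : (1:A) ∈ I := by simpa [J, TwoSidedIdeal.mem_mk'] using h1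
  rw [eq_top_iff]
  intro z _
  simpa [smul_eq_mul] using I.smul_mem z h1'

/-- A simple artinian ring is semisimple: the socle is a nonzero two-sided ideal. -/
lemma isSemisimpleRing_of_simple {A : Type*} [Ring A] [IsSimpleRing A]
    [IsArtinianRing A] : IsSemisimpleRing A := by
  suffices h : sSup {m : Submodule A A | IsSimpleModule A m} = ⊤ from
    IsSemisimpleModule.of_sSup_simples_eq_top h
  have hatomic : IsAtomic (Submodule A A) :=
    isAtomic_of_orderBot_wellFounded_lt (IsWellFounded.wf)
  apply twosided_eq_top'
  · obtain ⟨m, hm⟩ := IsAtomic.exists_atom (Submodule A A)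
    intro h
    have hle : m ≤ ⊥ := h ▸ le_sSup (isSimpleModule_iff_isAtom.mpr hm)
    exact hm.1 (le_bot_iff.mp hle)
  · intro x hx y
    set r : A →ₗ[A] A := LinearMap.toSpanSingleton A A y with hr
    have hmap : ∀ m : Submodule A A, IsSimpleModule A m →
        Submodule.map r m ≤ sSup {m : Submodule A A | IsSimpleModule A m} := by
      intro m hm
      haveI := hm
      have hrange : Submodule.map r m = LinearMap.range (r ∘ₗ m.subtype) := by
        rw [LinearMap.range_comp, Submodule.range_subtype]
      rw [hrange]
      rcases LinearMap.injective_or_eq_zero (r ∘ₗ m.subtype) with hinj | hz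
      · have hs : IsSimpleModule A (LinearMap.range (r ∘ₗ m.subtype)) :=
          IsSimpleModule.congr (LinearEquiv.ofInjective _ hinj).symm
        exact le_sSup hs
      · rw [hz, LinearMap.range_zero]; exact bot_le
    have hcom : sSup {m : Submodule A A | IsSimpleModule A m} ≤
        Submodule.comap r (sSup {m : Submodule A A | IsSimpleModule A m}) := by
      apply sSup_le
      intro m hm
      exact Submodule.map_le_iff_le_comap.mp (hmap m hm)
    have := hcom hx
    simpa [r, LinearMap.toSpanSingleton_apply, smul_eq_mul] using this

/-- von Neumann regularity from semisimplicity. -/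
lemma exists_vnr {A : Type*} [Ring A] [IsSemisimpleRing A] (a : A) :
    ∃ b : A, a = a * b * a := by
  obtain ⟨e, he, hspan⟩ := IsSemisimpleRing.ideal_eq_span_idempotent (Ideal.span {a})
  have ha : a ∈ Ideal.span ({e} : Set A) := hspan ▸ Ideal.subset_span rfl
  have heA : e ∈ Ideal.span ({a} : Set A) := hspan.symm ▸ Ideal.subset_span rfl
  rw [Ideal.span, Submodule.mem_span_singleton] at ha heA
  obtain ⟨c, hc⟩ := ha
  obtain ⟨d, hd⟩ := heA
  refine ⟨d, ?_⟩
  have hae : a * e = a := by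
    calc a * e = c • e * e := by rw [hc]
    _ = c * (e * e) := by rw [smul_eq_mul, mul_assoc]
    _ = c * e := by rw [he]
    _ = a := by rw [← smul_eq_mul, hc]
  calc a = a * e := hae.symm
  _ = a * (d * a) := by rw [← hd, smul_eq_mul]
  _ = a * d * a := by rw [mul_assoc]

/-- From a nonzero nonunit we extract a nontrivial idempotent. -/
lemma exists_nontrivial_idem {F A : Type*} [Field F] [Ring A] [Algebra F A]
    [FiniteDimensional F A] [IsSemisimpleRing A]
    {a : A} (h0 : a ≠ 0) (hu : ¬ IsUnit a) : ∃ e : A, e * e = e ∧ e ≠ 0 ∧ e ≠ 1 := by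
  obtain ⟨e, he, hspan⟩ := IsSemisimpleRing.ideal_eq_span_idempotent (Ideal.span {a})
  refine ⟨e, he, ?_, ?_⟩
  · rintro rfl
    have ha : a ∈ Ideal.span ({(0:A)} : Set A) := hspan ▸ Ideal.subset_span rfl
    simp only [Ideal.span_singleton_eq_bot.mpr rfl, Ideal.mem_bot] at ha
    exact h0 ha
  · rintro rfl
    have h1 : (1:A) ∈ Ideal.span ({a} : Set A) := by
      rw [hspan]; exact Ideal.subset_span rfl
    rw [Ideal.span, Submodule.mem_span_singleton] at h1
    obtain ⟨c, hc⟩ := h1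
    rw [smul_eq_mul] at hc
    have hinj : Function.Injective (LinearMap.mulLeft F a) := by
      intro u v huv
      simp only [LinearMap.mulLeft_apply] at huv
      have : c * (a * u) = c * (a * v) := by rw [huv]
      simpa [← mul_assoc, hc] using this
    obtain ⟨d, hd⟩ := (LinearMap.injective_iff_surjective).mp hinj 1
    simp only [LinearMap.mulLeft_apply] at hd
    have hdc : d * a = 1 := by
      have h' : c * (a * d) = c := by rw [hd, mul_one]
      have hcd : c = d := by
        calc c = c * (a * d) := h'.symm
        _ = (c * a) * d := by rw [mul_assoc]
        _ = d := by rw [hc, one_mul]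
      rw [← hcd, hc]
    exact hu ⟨⟨a, d, hd, hdc⟩, rfl⟩

/-- In a simple ring, if `g, h` are idempotents with `h ≠ 0` then `g` can be
written as a finite sum `∑ (g sᵢ h)(h tᵢ g)`. -/
lemma exists_rep {A : Type*} [Ring A] [IsSimpleRing A] {g h : A}
    (hg : g * g = g) (hh : h * h = h) (h0 : h ≠ 0) :
    ∃ (n : ℕ) (s t : Fin n → A), g = ∑ i, (g * s i * h) * (h * t i * g) := by
  set L : Submodule A A := Submodule.span A {x | ∃ u, x = h * u} with hL
  have hLtop : L = ⊤ := by
    apply twosided_eq_top'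
    · intro hbot
      apply h0
      have : h ∈ L := Submodule.subset_span ⟨1, (mul_one h).symm⟩
      rw [hbot] at this
      simpa using this
    · intro x hx y
      induction hx using Submodule.span_induction with
      | mem z hz => obtain ⟨u, rfl⟩ := hz; exact Submodule.subset_span ⟨u * y, by rw [mul_assoc]⟩
      | zero => rw [zero_mul]; exact L.zero_mem
      | add u v hu hv hu' hv' => simpa [add_mul] using L.add_mem hu' hv'
      | smul c u hu hu' => simpa [smul_eq_mul, mul_assoc] using L.smul_mem c hu'
  have hgL : g ∈ L := by rw [hLtop]; trivial
  rw [hL, Submodule.mem_span_set'] at hgL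
  obtain ⟨n, c, v, hsum⟩ := hgL
  choose u hu using fun i => (v i).2
  refine ⟨n, c, u, ?_⟩
  have key : ∀ i, (g * c i * h) * (h * u i * g) = g * (c i • (v i : A)) * g := by
    intro i
    rw [smul_eq_mul, hu]
    calc (g * c i * h) * (h * u i * g) = g * c i * (h * h) * u i * g := by noncomm_ring
    _ = g * (c i * (h * u i)) * g := by rw [hh]; noncomm_ring
  calc g = g * g * g := by rw [hg, hg]
  _ = g * (∑ i, c i • (v i : A)) * g := by rw [hsum]
  _ = ∑ i, g * (c i • (v i : A)) * g := by rw [Finset.mul_sum, Finset.sum_mul]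
  _ = ∑ i, (g * c i * h) * (h * u i * g) := Finset.sum_congr rfl (fun i _ => (key i).symm)

/-- Commutators of two "diagonal corner" elements lie in the span of square-zero
elements, given a representation `e = ∑ aᵢ bᵢ` with `aᵢ ∈ eAf`, `bᵢ ∈ fAe`. -/
lemma dgg_mem {F A : Type*} [Field F] [Ring A] [Algebra F A]
    (V : Submodule F A) (hV : ∀ x : A, x * x = 0 → x ∈ V)
    {e f : A} (hee : e * e = e) (hef : e * f = 0) (hfe : f * e = 0)
    {n : ℕ} {s t : Fin n → A} (hrep : e = ∑ i, (e * s i * f) * (f * t i * e))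
    (x y : A) : (e*x*e)*(e*y*e) - (e*y*e)*(e*x*e) ∈ V := by
  have hee' : ∀ z : A, e * (e * z) = e * z := fun z => by rw [← mul_assoc, hee]
  have hef' : ∀ z : A, e * (f * z) = 0 := fun z => by rw [← mul_assoc, hef, zero_mul]
  have hfe' : ∀ z : A, f * (e * z) = 0 := fun z => by rw [← mul_assoc, hfe, zero_mul]
  have key : (e*x*e)*(e*y*e) - (e*y*e)*(e*x*e) =
      ∑ i, (((e*x*e) * (e * s i * f)) * ((f * t i * e) * (e*y*e)) -
        ((e*y*e) * ((e*x*e) * (e * s i * f))) * (f * t i * e)) := by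
    have h2 : ∑ i, (((e*x*e) * (e * s i * f)) * ((f * t i * e) * (e*y*e)) -
          ((e*y*e) * ((e*x*e) * (e * s i * f))) * (f * t i * e))
        = (e*x*e)*(∑ i, (e * s i * f) * (f * t i * e))*(e*y*e) -
          (e*y*e)*((e*x*e)*(∑ i, (e * s i * f) * (f * t i * e))) := by
      simp only [Finset.mul_sum, Finset.sum_mul, ← Finset.sum_sub_distrib]
      exact Finset.sum_congr rfl fun i _ => by noncomm_ring
    rw [h2, ← hrep]
    simp only [mul_assoc, hee', hee]
  rw [key]
  apply Submodule.sum_mem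
  intro i _
  have hid : ((e*x*e) * (e * s i * f)) * ((f * t i * e) * (e*y*e)) -
      ((e*y*e) * ((e*x*e) * (e * s i * f))) * (f * t i * e) =
      (((e*x*e) * (e * s i * f)) * ((f * t i * e) * (e*y*e)) -
        ((f * t i * e) * (e*y*e)) * ((e*x*e) * (e * s i * f))) +
      ((f * t i * e) * ((e*y*e) * ((e*x*e) * (e * s i * f))) -
        ((e*y*e) * ((e*x*e) * (e * s i * f))) * (f * t i * e)) := by
    noncomm_ring
  rw [hid]
  refine add_mem (sq_comm_mem V hV ?_ ?_) (sq_comm_mem V hV ?_ ?_)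
  · simp only [mul_assoc, hee', hef', hfe', mul_zero, zero_mul]
  · simp only [mul_assoc, hee', hef', hfe', mul_zero, zero_mul]
  · simp only [mul_assoc, hee', hef', hfe', mul_zero, zero_mul]
  · simp only [mul_assoc, hee', hef', hfe', mul_zero, zero_mul]

end Aux

theorem square_zero_span_eq_commutator_span (F A : Type*) [Field F] [Ring A]
    [Algebra F A] [IsSimpleRing A] [FiniteDimensional F A]
    (hnd : ∃ a : A, a ≠ 0 ∧ ¬ IsUnit a) :
    Submodule.span F {a : A | a * a = 0} =
      Submodule.span F {c : A | ∃ x y : A, c = x * y - y * x} := by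
  haveI : IsArtinianRing A := isArtinian_of_tower F inferInstance
  haveI : IsSemisimpleRing A := isSemisimpleRing_of_simple
  apply le_antisymm
  · -- square-zero elements are commutators, by von Neumann regularity
    apply Submodule.span_le.mpr
    intro a ha
    have ha : a * a = 0 := ha
    obtain ⟨b, hb⟩ := exists_vnr a
    apply Submodule.subset_span
    refine ⟨a * b, a, ?_⟩
    have h2 : a * (a * b) = 0 := by rw [← mul_assoc, ha, zero_mul]
    rw [h2, sub_zero]
    exact hb
  · -- commutators lie in the span of square-zero elements
    apply Submodule.span_le.mpr
    rintro c ⟨x, y, rfl⟩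
    set V : Submodule F A := Submodule.span F {a : A | a * a = 0} with hVdef
    have hV : ∀ z : A, z * z = 0 → z ∈ V := fun z hz => Submodule.subset_span hz
    obtain ⟨a₀, h0, hu⟩ := hnd
    obtain ⟨e, hee, he0, he1⟩ := exists_nontrivial_idem (F := F) h0 hu
    set f : A := 1 - e with hfdef
    have hef : e * f = 0 := by simp [hfdef, mul_sub, hee]
    have hfe : f * e = 0 := by simp [hfdef, sub_mul, hee]
    have hff : f * f = f := by simp [hfdef, mul_sub, sub_mul, hee]
    have hf0 : f ≠ 0 := by
      intro h
      apply he1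
      have : (1:A) - e = 0 := h
      linear_combination (norm := abel) -this
    have hee' : ∀ z : A, e * (e * z) = e * z := fun z => by rw [← mul_assoc, hee]
    have hff' : ∀ z : A, f * (f * z) = f * z := fun z => by rw [← mul_assoc, hff]
    have hef' : ∀ z : A, e * (f * z) = 0 := fun z => by rw [← mul_assoc, hef, zero_mul]
    have hfe' : ∀ z : A, f * (e * z) = 0 := fun z => by rw [← mul_assoc, hfe, zero_mul]
    obtain ⟨n, s, t, hrepe⟩ := exists_rep (A := A) hee hff hf0
    obtain ⟨m, s', t', hrepf⟩ := exists_rep (A := A) hff hee he0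
    have hx : x = e*x*e + e*x*f + f*x*e + f*x*f := by
      have h1 : x = (e+f)*x*(e+f) := by
        rw [show e + f = 1 by rw [hfdef]; abel, one_mul, mul_one]
      conv_lhs => rw [h1]
      noncomm_ring
    have hy : y = e*y*e + e*y*f + f*y*e + f*y*f := by
      have h1 : y = (e+f)*y*(e+f) := by
        rw [show e + f = 1 by rw [hfdef]; abel, one_mul, mul_one]
      conv_lhs => rw [h1]
      noncomm_ring
    have expand : x*y - y*x =
        ((((e*x*e)*(e*y*e) - (e*y*e)*(e*x*e)) + ((e*x*e)*(e*y*f) - (e*y*f)*(e*x*e))) +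
         (((e*x*e)*(f*y*e) - (f*y*e)*(e*x*e)) + ((e*x*e)*(f*y*f) - (f*y*f)*(e*x*e)))) +
        ((((e*x*f)*(e*y*e) - (e*y*e)*(e*x*f)) + ((e*x*f)*(e*y*f) - (e*y*f)*(e*x*f))) +
         (((e*x*f)*(f*y*e) - (f*y*e)*(e*x*f)) + ((e*x*f)*(f*y*f) - (f*y*f)*(e*x*f)))) +
        ((((f*x*e)*(e*y*e) - (e*y*e)*(f*x*e)) + ((f*x*e)*(e*y*f) - (e*y*f)*(f*x*e))) +
         (((f*x*e)*(f*y*e) - (f*y*e)*(f*x*e)) + ((f*x*e)*(f*y*f) - (f*y*f)*(f*x*e)))) +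
        ((((f*x*f)*(e*y*e) - (e*y*e)*(f*x*f)) + ((f*x*f)*(e*y*f) - (e*y*f)*(f*x*f))) +
         (((f*x*f)*(f*y*e) - (f*y*e)*(f*x*f)) + ((f*x*f)*(f*y*f) - (f*y*f)*(f*x*f)))) := by
      conv_lhs => rw [hx, hy]
      noncomm_ring
    rw [expand]
    refine add_mem (add_mem (add_mem (add_mem (add_mem ?h1111 ?h1112) (add_mem ?h1121 ?h1122))
        (add_mem (add_mem ?h1211 ?h1212) (add_mem ?h1221 ?h1222)))
        (add_mem (add_mem ?h2111 ?h2112) (add_mem ?h2121 ?h2122)))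
        (add_mem (add_mem ?h2211 ?h2212) (add_mem ?h2221 ?h2222))
    case h1111 => exact dgg_mem V hV hee hef hfe hrepe x y
    case h2222 => exact dgg_mem V hV hff hfe hef hrepf x y
    case h1221 =>
      refine sq_comm_mem V hV ?_ ?_ <;>
        simp only [mul_assoc, hee', hff', hef', hfe', mul_zero, zero_mul]
    case h2112 =>
      refine sq_comm_mem V hV ?_ ?_ <;>
        simp only [mul_assoc, hee', hff', hef', hfe', mul_zero, zero_mul]
    all_goals
      refine hV _ ?_
      simp only [sub_mul, mul_sub, mul_assoc, hee', hff', hef', hfe', hee, hff, hef, hfe,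
        mul_zero, zero_mul, sub_zero, zero_sub, neg_zero, sub_self, neg_mul, mul_neg]
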